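/- Assume χ(α_i, δ̂) = 1 for all i ∈ I, where δ̂ := α_0 + Σ_{t=1}^{N−1} α_t ∈ ⊕ℤα_i, and let Ψ : U^♮_χ → End_K(K^N ⊗_K K[t,t^{−1}]) be the K-algebra homomorphism of the vector representation (determined by parameters z_i, u_i ∈ K^×, with Ψ(K_∂)(e_k⊗t^m) = q^m e_k⊗t^m, Ψ(L_∂)(e_k⊗t^m) = q^{−m} e_k⊗t^m, Ψ(K_{α_i}) = z_i Σ_{t=1}^N (Π_{s=0}^{t−1} x_{is}^{−1}) e_{tt}, Ψ(L_{α_i}) = z_i q^{−2(ε_N,α_i)} Σ_{t=1}^N (Π_{s=0}^{t−1} x_{si}) e_{tt}, Ψ(E_0) = z_0u_0 d̄_1 q^{d̄_1}(q−q^{−1}) e_{N1}⊗t, Ψ(E_i) = −z_iu_i d̄_i q^{−d̄_i}(Π_{s=0}^{i−1} x_{is}^{−1})(q−q^{−1}) e_{i,i+1} for i ≥ 1, Ψ(F_0) = u_0^{−1} e_{1N}⊗t^{−1}, Ψ(F_i) = u_i^{−1} e_{i+1,i} for i ≥ 1, where x_{ij} := χ(α_i,α_j)). Let Z := Σ_{i=0}^{n−1}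 a_i ⌊A_i,B_i⌋ be the element of U^♮_χ built from B_{n−1} := E_n, B_i := ⌊E_{N−i−1},⌊B_{i+1},E_{i+1}⌋⌋ (i = n−2,…,0), A_0 := E_0, A_i := ⌊E_{N−i},⌊A_{i−1},E_i⌋⌋ (i = 1,…,n−1), a_0 := 1, a_i := a_{i−1}·χ(δ̂,α_{N−i})·χ(−α_i, Σ_{t=i+1}^{N−i−1}α_t)·χ(Σ_{t=i}^{N−i−1}α_t, −α_{N−i}). Then there exists b ∈ K^× such that Ψ(Z) = b·(1_N ⊗ t), i.e. Ψ(Z)(e_k ⊗ t^m) = b·e_k ⊗ t^{m+1} for all k ∈ {1,…,N} and m ∈ ℤ. -/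

import Mathlib

/-- Generators of the quantum superalgebra. -/
inductive QGen (Λ I : Type) : Type
  | Kg : Λ → QGen Λ I
  | Lg : Λ → QGen Λ I
  | Eg : I → QGen Λ I
  | Fg : I → QGen Λ I

/-- The lattice `V̂ = (⊕_{i∈I} ℤα_i) ⊕ ℤ∂` for `I = {0,…,2n−1}`. -/
abbrev Lam (n : ℕ) : Type := (Fin (2 * n) → ℤ) × ℤ

/-- The simple roots `α_i` as elements of `V̂`. -/
def αr (n : ℕ) (i : Fin (2 * n)) : Lam n := (Pi.single i 1, 0)

/-- The element `∂` of `V̂`. -/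
def dr (n : ℕ) : Lam n := (0, 1)

/-- `α` reindexed by `ℕ` (with junk value `0` out of range). -/
def αn (n : ℕ) (t : ℕ) : Lam n := if h : t < 2 * n then αr n ⟨t, h⟩ else 0

/-- `δ̂ = α_0 + Σ_{t=1}^{N−1} α_t`. -/
def hatδ (n : ℕ) : Lam n := ∑ t ∈ Finset.range (2 * n), αn n t

/-- `ε`-coordinates of `α_i` : `α_0 = δ̂ − ε_1 + ε_N`, `α_i = ε_i − ε_{i+1}`
(`ε`-indices 0-based). -/
def wVec (n : ℕ) (i : ℕ) : Fin (2 * n) → ℤ := fun t =>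
  if i = 0 then (if (t : ℕ) = 2 * n - 1 then 1 else 0) - (if (t : ℕ) = 0 then 1 else 0)
  else (if (t : ℕ) = i - 1 then 1 else 0) - (if (t : ℕ) = i then 1 else 0)

/-- The bilinear-form values `(α_i, α_j)`, from `(ε_s,ε_t) = δ_{st} d̄_s`. -/
def Bfm (n : ℕ) (i j : ℕ) : ℤ :=
  ∑ t : Fin (2 * n), (if (t : ℕ) < n then 1 else -1) * wVec n i t * wVec n j t

/-- `(ε_N, α_i)`. -/
def epsNdot (n : ℕ) (i : ℕ) : ℤ :=
  ∑ t : Fin (2 * n), (if (t : ℕ) < n then 1 else -1)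
    * (if (t : ℕ) = 2 * n - 1 then 1 else 0) * wVec n i t

section Defs

variable (K : Type) [Field K] (n : ℕ)

/-- The free algebra on the generators. -/
abbrev FA : Type := FreeAlgebra K (QGen (Lam n) (Fin (2 * n)))

def fK (a : Lam n) : FA K n := FreeAlgebra.ι K (QGen.Kg a)
def fL (a : Lam n) : FA K n := FreeAlgebra.ι K (QGen.Lg a)
def fE (i : Fin (2 * n)) : FA K n := FreeAlgebra.ι K (QGen.Eg i)
def fF (i : Fin (2 * n)) : FA K n := FreeAlgebra.ι K (QGen.Fg i)

variable (χ : Lam n → Lam n → Kˣ)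

/-- The `q`-bracket `⌊X,Y⌋ = XY − χ(μ,λ)⁻¹ YX` for `X` of degree `λ`, `Y` of
degree `μ` (free-algebra version, `E`-side). -/
def fbrE (lam mu : Lam n) (X Y : FA K n) : FA K n :=
  X * Y - ((((χ mu lam)⁻¹ : Kˣ) : K)) • (Y * X)

/-- The corresponding bracket on the `F`-side: the coefficient `χ(μ,λ)⁻¹` is
replaced by `χ(λ,μ)⁻¹`. -/
def fbrF (lam mu : Lam n) (X Y : FA K n) : FA K n :=
  X * Y - ((((χ lam mu)⁻¹ : Kˣ) : K)) • (Y * X)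

/-- The defining relations of the quantum affine superalgebra `U^♮_χ` of
`sl^{(1)}(n|n)`: the relations of `Ũ_χ` together with the Serre-type
relations for the `E_i` and the `F_i`. -/
inductive NRel : FA K n → FA K n → Prop
  | K0 : NRel (fK K n 0) 1
  | L0 : NRel (fL K n 0) 1
  | KK (a b : Lam n) : NRel (fK K n a * fK K n b) (fK K n (a + b))
  | LL (a b : Lam n) : NRel (fL K n a * fL K n b) (fL K n (a + b))
  | KL (a b : Lam n) : NRel (fK K n a * fL K n b) (fL K n b * fK K n a)
  | KE (a : Lam n) (i : Fin (2 * n)) :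
      NRel (fK K n a * fE K n i) ((χ a (αr n i) : K) • (fE K n i * fK K n a))
  | KF (a : Lam n) (i : Fin (2 * n)) :
      NRel (fK K n a * fF K n i) ((((χ a (αr n i))⁻¹ : Kˣ) : K) • (fF K n i * fK K n a))
  | LE (a : Lam n) (i : Fin (2 * n)) :
      NRel (fL K n a * fE K n i) ((((χ (αr n i) a)⁻¹ : Kˣ) : K) • (fE K n i * fL K n a))
  | LF (a : Lam n) (i : Fin (2 * n)) :
      NRel (fL K n a * fF K n i) ((χ (αr n i) a : K) • (fF K n i * fL K n a))
  | EFsame (i : Fin (2 * n)) :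
      NRel (fE K n i * fF K n i - fF K n i * fE K n i) (-fK K n (αr n i) + fL K n (αr n i))
  | EFne (i j : Fin (2 * n)) (h : i ≠ j) :
      NRel (fE K n i * fF K n j - fF K n j * fE K n i) 0
  | SE1 (i j : Fin (2 * n)) (h : Bfm n i j = 0) :
      NRel (fbrE K n χ (αr n i) (αr n j) (fE K n i) (fE K n j)) 0
  | SE2 (i j : Fin (2 * n)) (hne : i ≠ j) (h1 : -(2 * Bfm n i j) = Bfm n i i)
      (h2 : Bfm n i i ≠ 0) :
      NRel (fbrE K n χ (αr n i) (αr n i + αr n j) (fE K n i)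
        (fbrE K n χ (αr n i) (αr n j) (fE K n i) (fE K n j))) 0
  | SE3 (i j : Fin (2 * n)) (hne : i ≠ j) (h1 : -(Bfm n i j) = Bfm n i i)
      (h2 : Bfm n i i ≠ 0) :
      NRel (fbrE K n χ (αr n i) (αr n i + (αr n i + αr n j)) (fE K n i)
        (fbrE K n χ (αr n i) (αr n i + αr n j) (fE K n i)
          (fbrE K n χ (αr n i) (αr n j) (fE K n i) (fE K n j)))) 0
  | SE4 (i j k : Fin (2 * n)) (h1 : i ≠ j) (h2 : j ≠ k) (h3 : k ≠ i)
      (h4 : Bfm n i i = 0) (h5 : Bfm n j k = 0)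
      (h6 : -(Bfm n i j) = Bfm n i k) (h7 : Bfm n i k ≠ 0) :
      NRel (fbrE K n χ (αr n i + αr n j) (αr n i + αr n k)
        (fbrE K n χ (αr n i) (αr n j) (fE K n i) (fE K n j))
        (fbrE K n χ (αr n i) (αr n k) (fE K n i) (fE K n k))) 0
  | SF1 (i j : Fin (2 * n)) (h : Bfm n i j = 0) :
      NRel (fbrF K n χ (αr n i) (αr n j) (fF K n i) (fF K n j)) 0
  | SF2 (i j : Fin (2 * n)) (hne : i ≠ j) (h1 : -(2 * Bfm n i j) = Bfm n i i)
      (h2 : Bfm n i i ≠ 0) :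
      NRel (fbrF K n χ (αr n i) (αr n i + αr n j) (fF K n i)
        (fbrF K n χ (αr n i) (αr n j) (fF K n i) (fF K n j))) 0
  | SF3 (i j : Fin (2 * n)) (hne : i ≠ j) (h1 : -(Bfm n i j) = Bfm n i i)
      (h2 : Bfm n i i ≠ 0) :
      NRel (fbrF K n χ (αr n i) (αr n i + (αr n i + αr n j)) (fF K n i)
        (fbrF K n χ (αr n i) (αr n i + αr n j) (fF K n i)
          (fbrF K n χ (αr n i) (αr n j) (fF K n i) (fF K n j)))) 0
  | SF4 (i j k : Fin (2 * n)) (h1 : i ≠ j) (h2 : j ≠ k) (h3 : k ≠ i)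
      (h4 : Bfm n i i = 0) (h5 : Bfm n j k = 0)
      (h6 : -(Bfm n i j) = Bfm n i k) (h7 : Bfm n i k ≠ 0) :
      NRel (fbrF K n χ (αr n i + αr n j) (αr n i + αr n k)
        (fbrF K n χ (αr n i) (αr n j) (fF K n i) (fF K n j))
        (fbrF K n χ (αr n i) (αr n k) (fF K n i) (fF K n k))) 0

/-- The quantum affine superalgebra `U^♮_χ` of `sl^{(1)}(n|n)`. -/
abbrev Unat : Type := RingQuot (NRel K n χ)

def uK (a : Lam n) : Unat K n χ := RingQuot.mkAlgHom K (NRel K n χ) (fK K n a)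
def uL (a : Lam n) : Unat K n χ := RingQuot.mkAlgHom K (NRel K n χ) (fL K n a)
def uE (i : Fin (2 * n)) : Unat K n χ := RingQuot.mkAlgHom K (NRel K n χ) (fE K n i)
def uF (i : Fin (2 * n)) : Unat K n χ := RingQuot.mkAlgHom K (NRel K n χ) (fF K n i)

/-- `E` reindexed by `ℕ` (junk value `0` out of range). -/
def uEn (t : ℕ) : Unat K n χ := if h : t < 2 * n then uE K n χ ⟨t, h⟩ else 0

/-- The `q`-bracket in `U^♮_χ` (for `X` of degree `λ` and `Y` of degree `μ`). -/
def ubrE (lam mu : Lam n) (X Y : Unat K n χ) : Unat K n χ :=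
  X * Y - ((((χ mu lam)⁻¹ : Kˣ) : K)) • (Y * X)

/-- `deg B_i = Σ_{t=i+1}^{N−i−1} α_t`. -/
def degB (i : ℕ) : Lam n := ∑ t ∈ Finset.Icc (i + 1) (2 * n - i - 1), αn n t

/-- `C j := B_{n−1−j}` : `C 0 = E_n`,
`C (j+1) = ⌊E_{n+j+1}, ⌊C j, E_{n−1−j}⌋⌋`. -/
def Cseq : ℕ → Unat K n χ
  | 0 => uEn K n χ n
  | j + 1 =>
      ubrE K n χ (αn n (n + j + 1)) (degB n (n - 1 - j) + αn n (n - 1 - j))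
        (uEn K n χ (n + j + 1))
        (ubrE K n χ (degB n (n - 1 - j)) (αn n (n - 1 - j)) (Cseq j) (uEn K n χ (n - 1 - j)))

/-- `B_i` (for `i ∈ {0,…,n−1}`): `B_{n−1} = E_n`,
`B_i = ⌊E_{N−i−1}, ⌊B_{i+1}, E_{i+1}⌋⌋`. -/
def Bseq (i : ℕ) : Unat K n χ := Cseq K n χ (n - 1 - i)

/-- `deg A_i = α_0 + Σ_{t=1}^{i} α_t + Σ_{t=N−i}^{N−1} α_t`. -/
def degA (i : ℕ) : Lam n :=
  αn n 0 + (∑ t ∈ Finset.Icc 1 i, αn n t) + ∑ t ∈ Finset.Icc (2 * n - i) (2 * n - 1), αn n t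

/-- `A_0 = E_0`, `A_i = ⌊E_{N−i}, ⌊A_{i−1}, E_i⌋⌋`. -/
def Aseq : ℕ → Unat K n χ
  | 0 => uEn K n χ 0
  | i + 1 =>
      ubrE K n χ (αn n (2 * n - i - 1)) (degA n i + αn n (i + 1))
        (uEn K n χ (2 * n - i - 1))
        (ubrE K n χ (degA n i) (αn n (i + 1)) (Aseq i) (uEn K n χ (i + 1)))

/-- The scalars `a_i`. -/
def aScal : ℕ → K
  | 0 => 1
  | i + 1 =>
      aScal i * (χ (hatδ n) (αn n (2 * n - i - 1)) : K)
        * (χ (-αn n (i + 1)) (∑ t ∈ Finset.Icc (i + 2) (2 * n - i - 2), αn n t) : K)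
        * (χ (∑ t ∈ Finset.Icc (i + 1) (2 * n - i - 2), αn n t) (-αn n (2 * n - i - 1)) : K)

/-- The element `Z = Σ_{i=0}^{n−1} a_i ⌊A_i, B_i⌋` of `U^♮_χ`. -/
def Zel : Unat K n χ :=
  ∑ i ∈ Finset.range n,
    aScal K n χ i • ubrE K n χ (degA n i) (degB n i) (Aseq K n χ i) (Bseq K n χ i)

end Defs

section Rep

variable (K : Type) [Field K] (n : ℕ)

/-- The representation space `K^N ⊗ K[t,t⁻¹]`, with basis `e_k ⊗ t^m`. -/
abbrev VRep : Type := (Fin (2 * n) × ℤ) →₀ K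

/-- The basis vector `e_k ⊗ t^m`. -/
noncomputable def basV (k : Fin (2 * n)) (m : ℤ) : VRep K n := Finsupp.single (k, m) 1

/-- `d̄_i` (1-based), as an integer exponent. -/
def dZ1 (i : ℕ) : ℤ := if i ≤ n then 1 else -1

/-- `d̄_i` (1-based), as a scalar. -/
def dK1 (i : ℕ) : K := if i ≤ n then 1 else -1

variable (χ : Lam n → Lam n → Kˣ) (q : Kˣ) (z u : Fin (2 * n) → Kˣ)

/-- The eigenvalue of `Ψ(K_{α_i})` on `e_k ⊗ t^m` (`k` 0-based):
`z_i Π_{s=0}^{k} x_{is}⁻¹`. -/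
def lamK (i : Fin (2 * n)) (k : ℕ) : Kˣ :=
  z i * ∏ s ∈ Finset.range (k + 1), (χ (αr n i) (αn n s))⁻¹

/-- The eigenvalue of `Ψ(L_{α_i})` on `e_k ⊗ t^m` (`k` 0-based):
`z_i q^{−2(ε_N,α_i)} Π_{s=0}^{k} x_{si}`. -/
def lamL (i : Fin (2 * n)) (k : ℕ) : Kˣ :=
  z i * q ^ (-(2 * epsNdot n i)) * ∏ s ∈ Finset.range (k + 1), χ (αn n s) (αr n i)

/-- The coefficient of `Ψ(E_0) = z_0u_0 d̄_1 q^{d̄_1}(q−q⁻¹) e_{N1} ⊗ t`. -/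
def cE0 (hpos : 0 < n) : K :=
  ((z ⟨0, by omega⟩ * u ⟨0, by omega⟩ : Kˣ) : K) * dK1 K n 1 * ((q ^ dZ1 n 1 : Kˣ) : K)
    * ((q : K) - ((q⁻¹ : Kˣ) : K))

/-- The coefficient of
`Ψ(E_i) = −z_iu_i d̄_i q^{−d̄_i}(Π_{s=0}^{i−1} x_{is}⁻¹)(q−q⁻¹) e_{i,i+1}`. -/
def cEi (i : Fin (2 * n)) : K :=
  -(((z i * u i : Kˣ) : K) * dK1 K n (i : ℕ) * ((q ^ (-dZ1 n (i : ℕ)) : Kˣ) : K)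
    * ((∏ s ∈ Finset.range (i : ℕ), (χ (αr n i) (αn n s))⁻¹ : Kˣ) : K)
    * ((q : K) - ((q⁻¹ : Kˣ) : K)))

end Rep

-- ===== auxiliary integer lemmas =====
def sgAux (n t : ℕ) : ℤ := if t < n then 1 else -1
def indV (n p : ℕ) : Fin (2*n) → ℤ := fun t => if (t:ℕ) = p then 1 else 0
def Bf (n : ℕ) (v w : Fin (2*n) → ℤ) : ℤ := ∑ t : Fin (2*n), sgAux n t * v t * w t

lemma Bfm_eq_Bf (n i j : ℕ) : Bfm n i j = Bf n (wVec n i) (wVec n j) := rfl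

lemma Bf_sub_left (n : ℕ) (v₁ v₂ w : Fin (2*n) → ℤ) :
    Bf n (v₁ - v₂) w = Bf n v₁ w - Bf n v₂ w := by
  simp [Bf, sub_mul, mul_sub, Finset.sum_sub_distrib]

lemma Bf_sub_right (n : ℕ) (v w₁ w₂ : Fin (2*n) → ℤ) :
    Bf n v (w₁ - w₂) = Bf n v w₁ - Bf n v w₂ := by
  simp [Bf, sub_mul, mul_sub, Finset.sum_sub_distrib]

lemma Bf_sum_left (n : ℕ) (s : Finset ℕ) (f : ℕ → Fin (2*n) → ℤ) (w : Fin (2*n) → ℤ) :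
    Bf n (∑ t ∈ s, f t) w = ∑ t ∈ s, Bf n (f t) w := by
  simp only [Bf, Finset.sum_apply, Finset.mul_sum, Finset.sum_mul]
  exact Finset.sum_comm

lemma Bf_sum_right (n : ℕ) (s : Finset ℕ) (v : Fin (2*n) → ℤ) (f : ℕ → Fin (2*n) → ℤ) :
    Bf n v (∑ t ∈ s, f t) = ∑ t ∈ s, Bf n v (f t) := by
  simp only [Bf, Finset.sum_apply, Finset.mul_sum]
  exact Finset.sum_comm

lemma Bf_zero_left (n : ℕ) (w : Fin (2*n) → ℤ) : Bf n 0 w = 0 := by simp [Bf]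

lemma Bf_ind (n p s : ℕ) (hp : p < 2*n) :
    Bf n (indV n p) (indV n s) = if p = s then sgAux n p else 0 := by
  rw [Bf]
  rw [Finset.sum_eq_single ⟨p, hp⟩]
  · simp only [indV]
    by_cases h : p = s <;> simp [h]
  · intro b _ hb
    have : (b : ℕ) ≠ p := fun h => hb (Fin.ext h)
    simp [indV, this]
  · simp

lemma wVec_zero (n : ℕ) : wVec n 0 = indV n (2*n-1) - indV n 0 := by
  funext t; simp [wVec, indV]

lemma wVec_pos (n i : ℕ) (h : i ≠ 0) : wVec n i = indV n (i-1) - indV n i := by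
  funext t; simp [wVec, indV, h]

lemma sum_wVec (n a b : ℕ) (ha : 1 ≤ a) (hab : a ≤ b) :
    ∑ t ∈ Finset.Icc a b, wVec n t = indV n (a-1) - indV n b := by
  induction b, hab using Nat.le_induction with
  | base => rw [Finset.Icc_self, Finset.sum_singleton, wVec_pos n a (by omega)]
  | succ b hb ih =>
      rw [Finset.sum_Icc_succ_top (by omega), ih, wVec_pos n (b+1) (by omega)]
      have : (b+1)-1 = b := by omega
      rw [this]; abel

lemma sum_wVec_range (n : ℕ) (hn : 1 ≤ n) :
    ∑ t ∈ Finset.range (2*n), wVec n t = 0 := by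
  have h1 : Finset.range (2*n) = insert 0 (Finset.Icc 1 (2*n-1)) := by
    ext x; simp; omega
  rw [h1, Finset.sum_insert (by simp), sum_wVec n 1 (2*n-1) le_rfl (by omega), wVec_zero]
  norm_num

lemma Bfm_pos (n i j : ℕ) (hi : i ≠ 0) (hj : j ≠ 0) (hi1 : i < 2*n) :
    Bfm n i j = ((if i-1 = j-1 then sgAux n (i-1) else 0) - (if i-1 = j then sgAux n (i-1) else 0))
      - ((if i = j-1 then sgAux n i else 0) - (if i = j then sgAux n i else 0)) := by
  rw [Bfm_eq_Bf, wVec_pos n i hi, wVec_pos n j hj, Bf_sub_left, Bf_sub_right, Bf_sub_right,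
    Bf_ind n (i-1) (j-1) (by omega), Bf_ind n (i-1) j (by omega),
    Bf_ind n i (j-1) hi1, Bf_ind n i j hi1]

lemma Bfm_nn (n : ℕ) (hn : 1 ≤ n) : Bfm n n n = 0 := by
  rw [Bfm_pos n n n (by omega) (by omega) (by omega)]
  simp [sgAux]; omega

lemma Bfm_low (n i : ℕ) (h1 : 1 ≤ i) (h2 : i < n) : Bfm n i i = 2 := by
  rw [Bfm_pos n i i (by omega) (by omega) (by omega)]
  have h3 : i - 1 ≠ i := by omega
  have h4 : i - 1 < n := by omega
  simp [sgAux, h3, h4, h2]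
  omega

lemma Bfm_high (n i : ℕ) (h1 : n < i) (h2 : i < 2*n) : Bfm n i i = -2 := by
  rw [Bfm_pos n i i (by omega) (by omega) (by omega)]
  have h3 : i - 1 ≠ i := by omega
  have h4 : ¬ (i - 1 < n) := by omega
  have h5 : ¬ (i < n) := by omega
  have h6 : ¬ (i = i - 1) := by omega
  rw [if_neg h6]
  simp [sgAux, h3, h4, h5]

lemma Bfm_far (n i j : ℕ) (hi : i ≠ 0) (hj : j ≠ 0) (hi1 : i < 2*n)
    (h : i + 1 < j) : Bfm n i j = 0 := by
  rw [Bfm_pos n i j hi hj hi1]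
  have a1 : i - 1 ≠ j - 1 := by omega
  have a2 : i - 1 ≠ j := by omega
  have a3 : i ≠ j - 1 := by omega
  have a4 : i ≠ j := by omega
  simp [a1, a2, a3, a4]

lemma Bfm_sum_right (n i a b : ℕ) (hi : i ≠ 0) (hi1 : i < 2*n) (ha : 1 ≤ a) (hab : a ≤ b) :
    ∑ t ∈ Finset.Icc a b, Bfm n i t
      = ((if i-1 = a-1 then sgAux n (i-1) else 0) - (if i-1 = b then sgAux n (i-1) else 0))
      - ((if i = a-1 then sgAux n i else 0) - (if i = b then sgAux n i else 0)) := by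
  have : ∑ t ∈ Finset.Icc a b, Bfm n i t = Bf n (wVec n i) (∑ t ∈ Finset.Icc a b, wVec n t) := by
    rw [Bf_sum_right]
    exact Finset.sum_congr rfl fun t _ => Bfm_eq_Bf n i t
  rw [this, sum_wVec n a b ha hab, wVec_pos n i hi, Bf_sub_left, Bf_sub_right, Bf_sub_right,
    Bf_ind n (i-1) (a-1) (by omega), Bf_ind n (i-1) b (by omega),
    Bf_ind n i (a-1) hi1, Bf_ind n i b hi1]

lemma Bfm_sum_left (n j a b : ℕ) (hj : j ≠ 0) (ha : 1 ≤ a) (hab : a ≤ b) (hb : a - 1 < 2*n) :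
    ∑ t ∈ Finset.Icc a b, Bfm n t j
      = ((if a-1 = j-1 then sgAux n (a-1) else 0) - (if a-1 = j then sgAux n (a-1) else 0))
      - (if b < 2*n then ((if b = j-1 then sgAux n b else 0) - (if b = j then sgAux n b else 0)) else 0) := by
  have : ∑ t ∈ Finset.Icc a b, Bfm n t j = Bf n (∑ t ∈ Finset.Icc a b, wVec n t) (wVec n j) := by
    rw [Bf_sum_left]
    exact Finset.sum_congr rfl fun t _ => Bfm_eq_Bf n t j
  rw [this, sum_wVec n a b ha hab, wVec_pos n j hj, Bf_sub_left, Bf_sub_right, Bf_sub_right,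
    Bf_ind n (a-1) (j-1) hb, Bf_ind n (a-1) j hb]
  by_cases hb2 : b < 2*n
  · rw [Bf_ind n b (j-1) hb2, Bf_ind n b j hb2, if_pos hb2]
  · have h0 : indV n b = 0 := by
      funext t; simp only [indV]
      have : (t:ℕ) ≠ b := by omega
      simp [this]
    rw [h0, if_neg hb2]
    simp [Bf_zero_left]

section ChiAux
variable {K : Type} [Field K] {n : ℕ} (χ : Lam n → Lam n → Kˣ)
variable (hχ1 : ∀ a b c : Lam n, χ (a + b) c = χ a c * χ b c)
variable (hχ2 : ∀ a b c : Lam n, χ a (b + c) = χ a b * χ a c)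

include hχ1 in
lemma chi_zero_left (c : Lam n) : χ 0 c = 1 := by
  have h := hχ1 0 0 c
  rw [add_zero] at h
  exact (mul_left_cancel (a := χ 0 c) (by rw [mul_one, ← h])).symm

include hχ2 in
lemma chi_zero_right (a : Lam n) : χ a 0 = 1 := by
  have h := hχ2 a 0 0
  rw [add_zero] at h
  exact (mul_left_cancel (a := χ a 0) (by rw [mul_one, ← h])).symm

include hχ1 in
lemma chi_neg_left (a c : Lam n) : χ (-a) c = (χ a c)⁻¹ := by
  apply eq_inv_of_mul_eq_one_left
  rw [← hχ1, neg_add_cancel, chi_zero_left χ hχ1]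

include hχ2 in
lemma chi_neg_right (a c : Lam n) : χ a (-c) = (χ a c)⁻¹ := by
  apply eq_inv_of_mul_eq_one_left
  rw [← hχ2, neg_add_cancel, chi_zero_right χ hχ2]

include hχ1 in
lemma chi_sum_left (s : Finset ℕ) (f : ℕ → Lam n) (c : Lam n) :
    χ (∑ t ∈ s, f t) c = ∏ t ∈ s, χ (f t) c := by
  induction s using Finset.cons_induction with
  | empty => simpa using chi_zero_left χ hχ1 c
  | cons a s ha ih => rw [Finset.sum_cons, Finset.prod_cons, hχ1, ih]

include hχ2 in
lemma chi_sum_right (s : Finset ℕ) (a : Lam n) (f : ℕ → Lam n) :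
    χ a (∑ t ∈ s, f t) = ∏ t ∈ s, χ a (f t) := by
  induction s using Finset.cons_induction with
  | empty => simpa using chi_zero_right χ hχ2 a
  | cons b s hb ih => rw [Finset.sum_cons, Finset.prod_cons, hχ2, ih]

end ChiAux

lemma prod_zpow_sum {K : Type} [Field K] (q : Kˣ) (s : Finset ℕ) (f : ℕ → ℤ) :
    ∏ t ∈ s, q ^ (f t) = q ^ (∑ t ∈ s, f t) := by
  induction s using Finset.cons_induction with
  | empty => simp
  | cons a s ha ih => rw [Finset.prod_cons, Finset.sum_cons, ih, zpow_add]


-- ===== chunk 4 : chi computations =====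
section ChiComp
variable {K : Type} [Field K] {n : ℕ} (χ : Lam n → Lam n → Kˣ) (q : Kˣ)
variable (hχ1 : ∀ a b c : Lam n, χ (a + b) c = χ a c * χ b c)
variable (hχ2 : ∀ a b c : Lam n, χ a (b + c) = χ a b * χ a c)
variable (hχd : ∀ i : Fin (2 * n), Bfm n i i ≠ 0 → χ (αr n i) (αr n i) = q ^ (Bfm n i i))
variable (hχ0 : ∀ i : Fin (2 * n), Bfm n i i = 0 → ((χ (αr n i) (αr n i) : Kˣ) : K) = -1)
variable (hχij : ∀ i j : Fin (2 * n), i ≠ j →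
      χ (αr n i) (αr n j) * χ (αr n j) (αr n i) = q ^ (2 * Bfm n i j))
variable (hδ : ∀ i : Fin (2 * n), χ (αr n i) (hatδ n) = 1)

lemma αn_lt {n : ℕ} (t : ℕ) (h : t < 2*n) : αn n t = αr n ⟨t, h⟩ := dif_pos h

lemma Bfm_sum_range {n : ℕ} (j : ℕ) (hn : 1 ≤ n) :
    ∑ t ∈ Finset.range (2*n), Bfm n t j = 0 := by
  have h : ∑ t ∈ Finset.range (2*n), Bfm n t j
      = Bf n (∑ t ∈ Finset.range (2*n), wVec n t) (wVec n j) := by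
    rw [Bf_sum_left]
    exact Finset.sum_congr rfl fun t _ => Bfm_eq_Bf n t j
  rw [h, sum_wVec_range n hn, Bf_zero_left]

include hχ1 hχ2 hχd hχ0 hχij hδ in
lemma chi_hatδ_left (hn : 1 ≤ n) (j : ℕ) (hj : j < 2*n) : χ (hatδ n) (αn n j) = 1 := by
  have hjr : j ∈ Finset.range (2*n) := Finset.mem_range.mpr hj
  have key : χ (hatδ n) (αn n j) * χ (αn n j) (hatδ n) = 1 := by
    rw [hatδ, chi_sum_left χ hχ1, chi_sum_right χ hχ2, ← Finset.prod_mul_distrib]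
    rw [← Finset.mul_prod_erase _ _ hjr]
    have hrest : ∏ t ∈ (Finset.range (2*n)).erase j,
        (χ (αn n t) (αn n j) * χ (αn n j) (αn n t))
        = q ^ (∑ t ∈ (Finset.range (2*n)).erase j, 2 * Bfm n t j) := by
      rw [← prod_zpow_sum]
      refine Finset.prod_congr rfl fun t ht => ?_
      have ht1 : t ≠ j := Finset.ne_of_mem_erase ht
      have ht2 : t < 2*n := Finset.mem_range.mp (Finset.mem_of_mem_erase ht)
      rw [αn_lt t ht2, αn_lt j hj]
      exact hχij ⟨t, ht2⟩ ⟨j, hj⟩ (Fin.ne_of_val_ne ht1)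
    have hsum : ∑ t ∈ (Finset.range (2*n)).erase j, 2 * Bfm n t j = -(2 * Bfm n j j) := by
      have h1 : ∑ t ∈ (Finset.range (2*n)).erase j, 2 * Bfm n t j + 2 * Bfm n j j
          = ∑ t ∈ Finset.range (2*n), 2 * Bfm n t j := Finset.sum_erase_add _ _ hjr
      have h2 : ∑ t ∈ Finset.range (2*n), 2 * Bfm n t j = 0 := by
        rw [← Finset.mul_sum, Bfm_sum_range j hn, mul_zero]
      omega
    rw [hrest, hsum]
    by_cases hB : Bfm n j j = 0
    · rw [hB]
      have h3 : ((χ (αn n j) (αn n j) : Kˣ) : K) = -1 := by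
        rw [αn_lt j hj]; exact hχ0 ⟨j, hj⟩ hB
      apply Units.ext
      push_cast
      rw [h3]
      norm_num
    · rw [αn_lt j hj, hχd ⟨j, hj⟩ hB, ← zpow_add, ← zpow_add]
      have h4 : (Bfm n j j : ℤ) + Bfm n j j + -(2 * Bfm n j j) = 0 := by ring
      rw [h4, zpow_zero]
  have h2 : χ (αn n j) (hatδ n) = 1 := by rw [αn_lt j hj]; exact hδ ⟨j, hj⟩
  rw [h2, mul_one] at key
  exact key

end ChiComp


-- ===== chunk 5 : degB / degA chi values =====
lemma sum_Icc_split {M : Type*} [AddCommMonoid M] (f : ℕ → M) (a b c : ℕ)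
    (h1 : a ≤ b + 1) (h2 : b ≤ c) :
    ∑ t ∈ Finset.Icc a c, f t = ∑ t ∈ Finset.Icc a b, f t + ∑ t ∈ Finset.Icc (b+1) c, f t := by
  rw [← Finset.sum_union (by rw [Finset.disjoint_left]; intro x hx hx2; simp at hx hx2; omega)]
  apply Finset.sum_congr _ fun _ _ => rfl
  ext x; simp; omega

section ChiComp2
variable {K : Type} [Field K] {n : ℕ} (χ : Lam n → Lam n → Kˣ) (q : Kˣ)
variable (hχ1 : ∀ a b c : Lam n, χ (a + b) c = χ a c * χ b c)
variable (hχ2 : ∀ a b c : Lam n, χ a (b + c) = χ a b * χ a c)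
variable (hχd : ∀ i : Fin (2 * n), Bfm n i i ≠ 0 → χ (αr n i) (αr n i) = q ^ (Bfm n i i))
variable (hχ0 : ∀ i : Fin (2 * n), Bfm n i i = 0 → ((χ (αr n i) (αr n i) : Kˣ) : K) = -1)
variable (hχij : ∀ i j : Fin (2 * n), i ≠ j →
      χ (αr n i) (αr n j) * χ (αr n j) (αr n i) = q ^ (2 * Bfm n i j))
variable (hδ : ∀ i : Fin (2 * n), χ (αr n i) (hatδ n) = 1)

lemma degB_succ_sum (i : ℕ) :
    degB n (i+1) = ∑ t ∈ Finset.Icc (i+2) (2*n-i-2), αn n t := by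
  simp only [degB]
  have h : 2*n-(i+1)-1 = 2*n-i-2 := by omega
  rw [h]

lemma degB_split (i : ℕ) (h : i + 1 < n) :
    degB n i = αn n (i+1) + (degB n (i+1) + αn n (2*n-i-1)) := by
  rw [degB_succ_sum]
  simp only [degB]
  rw [sum_Icc_split (αn n) (i+1) (i+1) (2*n-i-1) (by omega) (by omega)]
  rw [sum_Icc_split (αn n) (i+2) (2*n-i-2) (2*n-i-1) (by omega) (by omega)]
  rw [show 2*n-i-2+1 = 2*n-i-1 by omega, Finset.Icc_self, Finset.sum_singleton,
    Finset.Icc_self, Finset.sum_singleton]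

include hχ1 hχ2 in
lemma chi_nine (a c b : Lam n) :
    χ (a+(c+b)) (a+(c+b))
      = χ a a * ((χ a c * χ c a) * ((χ a b * χ b a) * ((χ c b * χ b c) * (χ b b * χ c c)))) := by
  simp only [hχ1, hχ2]
  simp only [mul_comm, mul_assoc, mul_left_comm]

include hχ2 hχ1 hχij in
lemma chi_pair_sum (i0 a b : ℕ) (hi0 : i0 < 2*n) (hb : b < 2*n)
    (hnot : i0 < a ∨ b < i0) :
    χ (αn n i0) (∑ t ∈ Finset.Icc a b, αn n t) * χ (∑ t ∈ Finset.Icc a b, αn n t) (αn n i0)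
      = q ^ (∑ t ∈ Finset.Icc a b, 2 * Bfm n i0 t) := by
  rw [chi_sum_right χ hχ2, chi_sum_left χ hχ1, ← Finset.prod_mul_distrib, ← prod_zpow_sum]
  refine Finset.prod_congr rfl fun t ht => ?_
  rw [Finset.mem_Icc] at ht
  have ht2 : t < 2*n := by omega
  rw [αn_lt i0 hi0, αn_lt t ht2]
  exact hχij ⟨i0, hi0⟩ ⟨t, ht2⟩ (Fin.ne_of_val_ne (show i0 ≠ t by omega))

include hχ1 hχ2 hχd hχij in
lemma chiBB_step (hn : 2 ≤ n) (i : ℕ) (h : i + 1 < n) :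
    χ (degB n i) (degB n i) = χ (degB n (i+1)) (degB n (i+1)) := by
  have P4 : χ (αn n (i+1)) (αn n (i+1)) = q ^ (2:ℤ) := by
    rw [αn_lt (i+1) (by omega)]
    have hB : Bfm n (i+1) (i+1) = 2 := Bfm_low n (i+1) (by omega) h
    rw [hχd ⟨i+1, by omega⟩ (show Bfm n (i+1) (i+1) ≠ 0 by rw [hB]; norm_num)]
    show q ^ Bfm n (i+1) (i+1) = q ^ (2:ℤ)
    rw [hB]
  have P5 : χ (αn n (2*n-i-1)) (αn n (2*n-i-1)) = q ^ (-2:ℤ) := by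
    rw [αn_lt (2*n-i-1) (by omega)]
    have hB : Bfm n (2*n-i-1) (2*n-i-1) = -2 := Bfm_high n (2*n-i-1) (by omega) (by omega)
    rw [hχd ⟨2*n-i-1, by omega⟩ (show Bfm n (2*n-i-1) (2*n-i-1) ≠ 0 by rw [hB]; norm_num)]
    show q ^ Bfm n (2*n-i-1) (2*n-i-1) = q ^ (-2:ℤ)
    rw [hB]
  have P2 : χ (αn n (i+1)) (αn n (2*n-i-1)) * χ (αn n (2*n-i-1)) (αn n (i+1)) = 1 := by
    rw [αn_lt (i+1) (by omega), αn_lt (2*n-i-1) (by omega)]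
    rw [hχij ⟨i+1, by omega⟩ ⟨2*n-i-1, by omega⟩ (Fin.ne_of_val_ne (show i+1 ≠ 2*n-i-1 by omega))]
    have hB : Bfm n (i+1) (2*n-i-1) = 0 := Bfm_far n (i+1) (2*n-i-1) (by omega) (by omega) (by omega) (by omega)
    show q ^ (2 * Bfm n (i+1) (2*n-i-1)) = 1
    rw [hB]; norm_num
  have P1 : χ (αn n (i+1)) (degB n (i+1)) * χ (degB n (i+1)) (αn n (i+1)) = q ^ (-2:ℤ) := by
    rw [degB_succ_sum, chi_pair_sum χ q hχ1 hχ2 hχij (i+1) (i+2) (2*n-i-2) (by omega) (by omega) (by omega)]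
    have hS : ∑ t ∈ Finset.Icc (i+2) (2*n-i-2), Bfm n (i+1) t = -1 := by
      rw [Bfm_sum_right n (i+1) (i+2) (2*n-i-2) (by omega) (by omega) (by omega) (by omega)]
      have e1 : ¬ (i+1-1 = i+2-1) := by omega
      have e2 : ¬ (i+1-1 = 2*n-i-2) := by omega
      have e3 : (i+1 = i+2-1) := by omega
      have e4 : ¬ (i+1 = 2*n-i-2) := by omega
      rw [if_neg e1, if_neg e2, if_pos e3, if_neg e4]
      simp [sgAux, h]
    have hS2 : ∑ t ∈ Finset.Icc (i+2) (2*n-i-2), 2 * Bfm n (i+1) t = -2 := by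
      rw [← Finset.mul_sum, hS]; norm_num
    rw [hS2]
  have P3 : χ (degB n (i+1)) (αn n (2*n-i-1)) * χ (αn n (2*n-i-1)) (degB n (i+1)) = q ^ (2:ℤ) := by
    rw [mul_comm, degB_succ_sum, chi_pair_sum χ q hχ1 hχ2 hχij (2*n-i-1) (i+2) (2*n-i-2) (by omega) (by omega) (by omega)]
    have hS : ∑ t ∈ Finset.Icc (i+2) (2*n-i-2), Bfm n (2*n-i-1) t = 1 := by
      rw [Bfm_sum_right n (2*n-i-1) (i+2) (2*n-i-2) (by omega) (by omega) (by omega) (by omega)]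
      have e1 : ¬ (2*n-i-1-1 = i+2-1) := by omega
      have e2 : (2*n-i-1-1 = 2*n-i-2) := by omega
      have e3 : ¬ (2*n-i-1 = i+2-1) := by omega
      have e4 : ¬ (2*n-i-1 = 2*n-i-2) := by omega
      rw [if_neg e1, if_pos e2, if_neg e3, if_neg e4]
      have e5 : ¬ (2*n-i-1-1 < n) := by omega
      simp [sgAux, e5]
    have hS2 : ∑ t ∈ Finset.Icc (i+2) (2*n-i-2), 2 * Bfm n (2*n-i-1) t = 2 := by
      rw [← Finset.mul_sum, hS]; norm_num
    rw [hS2]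
  rw [degB_split i h, chi_nine χ hχ1 hχ2, P1, P2, P3, P4, P5]
  have hq2 : ∀ X : Kˣ, q^(2:ℤ) * (q^(-2:ℤ) * X) = X := fun X => by
    rw [← mul_assoc, ← zpow_add]; norm_num
  rw [one_mul, hq2, hq2]

include hχ1 hχ2 hχd hχ0 hχij in
lemma chiBB (hn : 2 ≤ n) (i : ℕ) (hi : i < n) :
    ((χ (degB n i) (degB n i) : Kˣ) : K) = -1 := by
  suffices H : ∀ d i, i < n → n-1-i = d → ((χ (degB n i) (degB n i) : Kˣ) : K) = -1 by
    exact H (n-1-i) i hi rfl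
  intro d
  induction d with
  | zero =>
      intro i hi hd
      have hie : i = n-1 := by omega
      subst hie
      have e : degB n (n-1) = αn n n := by
        simp only [degB]
        rw [show n-1+1 = n by omega, show 2*n-(n-1)-1 = n by omega, Finset.Icc_self,
          Finset.sum_singleton]
      rw [e, αn_lt n (by omega)]
      exact hχ0 ⟨n, by omega⟩ (Bfm_nn n (by omega))
  | succ d ih =>
      intro i hi hd
      rw [chiBB_step χ q hχ1 hχ2 hχd hχij hn i (by omega)]
      exact ih (i+1) (by omega) (by omega)

include hχ1 hδ in
lemma chi_degB_hatδ (hn : 2 ≤ n) (i : ℕ) : χ (degB n i) (hatδ n) = 1 := by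
  simp only [degB]
  rw [chi_sum_left χ hχ1]
  apply Finset.prod_eq_one
  intro t ht
  rw [Finset.mem_Icc] at ht
  have ht2 : t < 2*n := by omega
  rw [αn_lt t ht2]
  exact hδ ⟨t, ht2⟩

lemma degAB_sum (hn : 2 ≤ n) (i : ℕ) (hi : i < n) : degA n i + degB n i = hatδ n := by
  simp only [degA, degB, hatδ]
  have h1 : Finset.range (2*n) = insert 0 (Finset.Icc 1 (2*n-1)) := by
    ext x; simp; omega
  rw [h1, Finset.sum_insert (by simp)]
  rw [sum_Icc_split (αn n) 1 i (2*n-1) (by omega) (by omega)]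
  rw [sum_Icc_split (αn n) (i+1) (2*n-i-1) (2*n-1) (by omega) (by omega)]
  rw [show 2*n-i-1+1 = 2*n-i by omega]
  abel

include hχ1 hχ2 hχd hχ0 hχij hδ in
lemma chi_degB_degA (hn : 2 ≤ n) (i : ℕ) (hi : i < n) :
    ((χ (degB n i) (degA n i) : Kˣ) : K) = -1 := by
  have h1 : χ (degB n i) (degA n i) * χ (degB n i) (degB n i) = 1 := by
    rw [← hχ2, degAB_sum hn i hi, chi_degB_hatδ χ hχ1 hδ hn i]
  have h2 := congrArg (Units.val) h1
  push_cast at h2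
  rw [chiBB χ q hχ1 hχ2 hχd hχ0 hχij hn i hi] at h2
  linear_combination -h2

end ChiComp2


-- ===== chunk 6 : representation side =====
section RepSide
variable (K : Type) [Field K] (n : ℕ) (χ : Lam n → Lam n → Kˣ) (q : Kˣ)
  (z u : Fin (2 * n) → Kˣ)

/-- coefficient of `Ψ(E_t)` reindexed by ℕ (junk `1` out of range). -/
def cEn (t : ℕ) : K := if h : t < 2*n then cEi K n χ q z u ⟨t, h⟩ else 1

lemma cEn_lt (t : ℕ) (h : t < 2*n) : cEn K n χ q z u t = cEi K n χ q z u ⟨t, h⟩ := dif_pos h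

/-- scalar of `Ψ(A_i)`. -/
def alphaA : ℕ → K
  | 0 => if h : 0 < n then cE0 K n q z u h else 1
  | i + 1 => cEn K n χ q z u (2*n-i-1) * (cEn K n χ q z u (i+1) * alphaA i)

/-- scalar of `Ψ(C_j)`. -/
def gammaC : ℕ → K
  | 0 => cEn K n χ q z u n
  | j + 1 =>
      -(((χ (degB n (n-1-j) + αn n (n-1-j)) (αn n (n+j+1)))⁻¹ : Kˣ) : K)
        * (cEn K n χ q z u (n+j+1)
          * (-(((χ (αn n (n-1-j)) (degB n (n-1-j)))⁻¹ : Kˣ) : K)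
            * (gammaC j * cEn K n χ q z u (n-1-j))))

lemma uEn_lt (t : ℕ) (h : t < 2*n) : uEn K n χ t = uE K n χ ⟨t, h⟩ := dif_pos h

lemma basV_congr (k k' : Fin (2*n)) (m : ℤ) (h : (k : ℕ) = (k' : ℕ)) :
    basV K n k m = basV K n k' m := by
  congr 1
  exact Fin.ext h

variable (Ψ : Unat K n χ →ₐ[K] Module.End K (VRep K n))

lemma psi_ubr (lam mu : Lam n) (X Y : Unat K n χ) (v : VRep K n) :
    Ψ (ubrE K n χ lam mu X Y) v
      = Ψ X (Ψ Y v) - ((((χ mu lam)⁻¹ : Kˣ) : K)) • (Ψ Y (Ψ X v)) := by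
  simp only [ubrE, map_sub, map_smul, map_mul, LinearMap.sub_apply, LinearMap.smul_apply,
    Module.End.mul_apply]

end RepSide

section RepSide2
variable {K : Type} [Field K] {n : ℕ} (hn : 2 ≤ n) (χ : Lam n → Lam n → Kˣ) (q : Kˣ)
  (z u : Fin (2 * n) → Kˣ)
  (Ψ : Unat K n χ →ₐ[K] Module.End K (VRep K n))
  (hE0 : ∀ (k : Fin (2 * n)) (m : ℤ),
      Ψ (uE K n χ ⟨0, (Nat.mul_pos Nat.zero_lt_two (Nat.lt_of_lt_of_le Nat.zero_lt_two hn))⟩) (basV K n k m)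
        = if (k : ℕ) = 0 then cE0 K n q z u (Nat.lt_of_lt_of_le Nat.zero_lt_two hn) • basV K n ⟨2 * n - 1, Nat.sub_lt (Nat.mul_pos Nat.zero_lt_two (Nat.lt_of_lt_of_le Nat.zero_lt_two hn)) Nat.one_pos⟩ (m + 1)
          else 0)
  (hEi : ∀ (i : Fin (2 * n)), i ≠ ⟨0, (Nat.mul_pos Nat.zero_lt_two (Nat.lt_of_lt_of_le Nat.zero_lt_two hn))⟩ → ∀ (k : Fin (2 * n)) (m : ℤ),
      Ψ (uE K n χ i) (basV K n k m)
        = if (k : ℕ) = (i : ℕ)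
          then cEi K n χ q z u i • basV K n ⟨(i : ℕ) - 1, Nat.lt_of_le_of_lt (Nat.sub_le _ _) i.isLt⟩ m
          else 0)

include hn hE0 hEi in
set_option maxHeartbeats 1600000 in
lemma Arep : ∀ i, i < n → ∀ (k : Fin (2*n)) (m : ℤ),
    Ψ (Aseq K n χ i) (basV K n k m)
      = if (k : ℕ) = i then alphaA K n χ q z u i • basV K n ⟨2*n-1-i, by omega⟩ (m+1)
        else 0 := by
  intro i
  induction i with
  | zero =>
      intro _ k m
      show Ψ (uEn K n χ 0) (basV K n k m) = _
      rw [uEn_lt K n χ 0 (by omega), hE0 k m]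
      simp only [alphaA, dif_pos (show 0 < n by omega), Nat.sub_zero]
  | succ i ih =>
      intro hi k m
      have hiprev : i < n := by omega
      have hne1 : (⟨i+1, by omega⟩ : Fin (2*n)) ≠ ⟨0, by omega⟩ :=
        Fin.ne_of_val_ne (show i+1 ≠ 0 by omega)
      have hne2 : (⟨2*n-i-1, by omega⟩ : Fin (2*n)) ≠ ⟨0, by omega⟩ :=
        Fin.ne_of_val_ne (show 2*n-i-1 ≠ 0 by omega)
      have hInner : ∀ (k' : Fin (2*n)) (m' : ℤ),
          Ψ (ubrE K n χ (degA n i) (αn n (i+1)) (Aseq K n χ i) (uEn K n χ (i+1)))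
            (basV K n k' m')
          = if (k' : ℕ) = i+1
            then (cEn K n χ q z u (i+1) * alphaA K n χ q z u i) •
              basV K n ⟨2*n-1-i, by omega⟩ (m'+1)
            else 0 := by
        intro k' m'
        rw [psi_ubr, uEn_lt K n χ (i+1) (by omega), hEi ⟨i+1, by omega⟩ hne1 k' m',
          ih hiprev k' m']
        by_cases hk : (k' : ℕ) = i + 1
        · rw [if_pos hk, if_neg (show ¬ (k' : ℕ) = i by omega), map_zero, smul_zero,
            sub_zero, map_smul, ih hiprev ⟨i+1-1, by omega⟩ m',
            if_pos (show i+1-1 = i from rfl), if_pos hk, smul_smul,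
            ← cEn_lt K n χ q z u (i+1) (by omega)]
        · rw [if_neg hk, if_neg hk]
          by_cases hk2 : (k' : ℕ) = i
          · rw [if_pos hk2, map_zero, map_smul,
              hEi ⟨i+1, by omega⟩ hne1 ⟨2*n-1-i, by omega⟩ (m'+1),
              if_neg (show ¬ (2*n-1-i) = i+1 by omega)]
            simp
          · rw [if_neg hk2, map_zero, map_zero]
            simp
      show Ψ (ubrE K n χ (αn n (2*n-i-1)) (degA n i + αn n (i+1)) (uEn K n χ (2*n-i-1))
        (ubrE K n χ (degA n i) (αn n (i+1)) (Aseq K n χ i) (uEn K n χ (i+1))))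
          (basV K n k m) = _
      rw [psi_ubr, uEn_lt K n χ (2*n-i-1) (by omega), hInner k m,
        hEi ⟨2*n-i-1, by omega⟩ hne2 k m]
      by_cases hk : (k : ℕ) = i + 1
      · rw [if_pos hk, if_neg (show ¬ (k:ℕ) = 2*n-i-1 by omega), map_zero, smul_zero,
          sub_zero, map_smul,
          basV_congr K n ⟨2*n-1-i, by omega⟩ ⟨2*n-i-1, by omega⟩ (m+1)
            (show 2*n-1-i = 2*n-i-1 by omega),
          hEi ⟨2*n-i-1, by omega⟩ hne2 ⟨2*n-i-1, by omega⟩ (m+1), if_pos rfl,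
          basV_congr K n ⟨2*n-i-1-1, by omega⟩ ⟨2*n-1-(i+1), by omega⟩ (m+1)
            (show 2*n-i-1-1 = 2*n-1-(i+1) by omega),
          if_pos hk, smul_smul, ← cEn_lt K n χ q z u (2*n-i-1) (by omega)]
        rw [show alphaA K n χ q z u (i+1)
          = cEn K n χ q z u (2*n-i-1) * (cEn K n χ q z u (i+1) * alphaA K n χ q z u i)
          from rfl]
        rw [mul_comm (cEn K n χ q z u (i+1) * alphaA K n χ q z u i)]
      · rw [if_neg hk, if_neg hk, map_zero]
        by_cases hk2 : (k : ℕ) = 2*n-i-1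
        · rw [if_pos hk2, map_smul, hInner ⟨2*n-i-1-1, by omega⟩ m,
            if_neg (show ¬ (2*n-i-1-1) = i+1 by omega)]
          simp
        · rw [if_neg hk2, map_zero]
          simp


include hn hEi in
set_option maxHeartbeats 1600000 in
lemma Crep : ∀ j, j < n → ∀ (k : Fin (2*n)) (m : ℤ),
    Ψ (Cseq K n χ j) (basV K n k m)
      = if (k : ℕ) = n + j then gammaC K n χ q z u j • basV K n ⟨n-1-j, by omega⟩ m
        else 0 := by
  intro j
  induction j with
  | zero =>
      intro _ k m
      show Ψ (uEn K n χ n) (basV K n k m) = _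
      rw [uEn_lt K n χ n (by omega),
        hEi ⟨n, by omega⟩ (Fin.ne_of_val_ne (show n ≠ 0 by omega)) k m]
      by_cases hk : (k : ℕ) = n
      · rw [if_pos (show (k:ℕ) = n + 0 by omega), if_pos hk,
          ← cEn_lt K n χ q z u n (by omega)]
        rfl
      · rw [if_neg hk, if_neg (show ¬ (k:ℕ) = n + 0 by omega)]
  | succ j ih =>
      intro hj k m
      have hjprev : j < n := by omega
      have hne1 : (⟨n-1-j, by omega⟩ : Fin (2*n)) ≠ ⟨0, by omega⟩ :=
        Fin.ne_of_val_ne (show n-1-j ≠ 0 by omega)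
      have hne2 : (⟨n+j+1, by omega⟩ : Fin (2*n)) ≠ ⟨0, by omega⟩ :=
        Fin.ne_of_val_ne (show n+j+1 ≠ 0 by omega)
      have hInner : ∀ (k' : Fin (2*n)) (m' : ℤ),
          Ψ (ubrE K n χ (degB n (n-1-j)) (αn n (n-1-j)) (Cseq K n χ j) (uEn K n χ (n-1-j)))
            (basV K n k' m')
          = if (k' : ℕ) = n + j
            then (-(((χ (αn n (n-1-j)) (degB n (n-1-j)))⁻¹ : Kˣ) : K)
                * (gammaC K n χ q z u j * cEn K n χ q z u (n-1-j))) •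
              basV K n ⟨n-1-j-1, by omega⟩ m'
            else 0 := by
        intro k' m'
        rw [psi_ubr, uEn_lt K n χ (n-1-j) (by omega), hEi ⟨n-1-j, by omega⟩ hne1 k' m',
          ih hjprev k' m']
        by_cases hk : (k' : ℕ) = n + j
        · rw [if_neg (show ¬ (k' : ℕ) = n-1-j by omega), if_pos hk, map_zero, map_smul,
            hEi ⟨n-1-j, by omega⟩ hne1 ⟨n-1-j, by omega⟩ m', if_pos rfl,
            if_pos hk, zero_sub, smul_smul, smul_smul, ← neg_smul]
          congr 1
          rw [cEn_lt K n χ q z u (n-1-j) (by omega)]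
          ring
        · rw [if_neg hk, if_neg hk]
          by_cases hk2 : (k' : ℕ) = n-1-j
          · rw [if_pos hk2, map_smul, ih hjprev ⟨n-1-j-1, by omega⟩ m',
              if_neg (show ¬ (n-1-j-1) = n + j by omega), map_zero]
            simp
          · rw [if_neg hk2, map_zero, map_zero]
            simp
      show Ψ (ubrE K n χ (αn n (n+j+1)) (degB n (n-1-j) + αn n (n-1-j)) (uEn K n χ (n+j+1))
        (ubrE K n χ (degB n (n-1-j)) (αn n (n-1-j)) (Cseq K n χ j) (uEn K n χ (n-1-j))))
          (basV K n k m) = _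
      rw [psi_ubr, uEn_lt K n χ (n+j+1) (by omega), hInner k m,
        hEi ⟨n+j+1, by omega⟩ hne2 k m]
      by_cases hk : (k : ℕ) = n + (j+1)
      · rw [if_neg (show ¬ (k:ℕ) = n + j by omega), map_zero,
          if_pos (show (k:ℕ) = n+j+1 by omega), map_smul, hInner ⟨n+j+1-1, by omega⟩ m,
          if_pos (show n+j+1-1 = n+j from rfl),
          basV_congr K n ⟨n-1-j-1, by omega⟩ ⟨n-1-(j+1), by omega⟩ m
            (show n-1-j-1 = n-1-(j+1) by omega),
          if_pos hk, zero_sub, smul_smul, smul_smul, ← neg_smul]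
        congr 1
        show _ = gammaC K n χ q z u (j+1)
        rw [show gammaC K n χ q z u (j+1)
            = -(((χ (degB n (n-1-j) + αn n (n-1-j)) (αn n (n+j+1)))⁻¹ : Kˣ) : K)
              * (cEn K n χ q z u (n+j+1)
                * (-(((χ (αn n (n-1-j)) (degB n (n-1-j)))⁻¹ : Kˣ) : K)
                  * (gammaC K n χ q z u j * cEn K n χ q z u (n-1-j)))) from rfl,
          cEn_lt K n χ q z u (n+j+1) (by omega)]
        ring
      · rw [if_neg (show ¬ (k:ℕ) = n+j+1 by omega), map_zero, if_neg hk]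
        by_cases hk2 : (k : ℕ) = n + j
        · rw [if_pos hk2, map_smul, hEi ⟨n+j+1, by omega⟩ hne2 ⟨n-1-j-1, by omega⟩ m,
            if_neg (show ¬ (n-1-j-1) = n+j+1 by omega)]
          simp
        · rw [if_neg hk2, map_zero]
          simp

end RepSide2


-- ===== chunk 7 : scalars, constancy =====
section Scal
variable {K : Type} [Field K] {n : ℕ} (χ : Lam n → Lam n → Kˣ) (q : Kˣ)
  (z u : Fin (2 * n) → Kˣ)
  (hqq : (q : K) - ((q⁻¹ : Kˣ) : K) ≠ 0)

lemma dK1_ne (i : ℕ) : dK1 K n i ≠ 0 := by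
  unfold dK1; split <;> simp

include hqq in
lemma cE0_ne (h : 0 < n) : cE0 K n q z u h ≠ 0 := by
  unfold cE0
  exact mul_ne_zero (mul_ne_zero (mul_ne_zero (Units.ne_zero _) (dK1_ne 1)) (Units.ne_zero _)) hqq

include hqq in
lemma cEi_ne (i : Fin (2*n)) : cEi K n χ q z u i ≠ 0 := by
  unfold cEi
  apply neg_ne_zero.mpr
  exact mul_ne_zero (mul_ne_zero (mul_ne_zero (mul_ne_zero (Units.ne_zero _) (dK1_ne _))
    (Units.ne_zero _)) (Units.ne_zero _)) hqq

include hqq in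
lemma cEn_ne (t : ℕ) : cEn K n χ q z u t ≠ 0 := by
  unfold cEn
  split
  · exact cEi_ne χ q z u hqq _
  · exact one_ne_zero

include hqq in
lemma alphaA_ne (i : ℕ) : alphaA K n χ q z u i ≠ 0 := by
  induction i with
  | zero =>
      show (if h : 0 < n then cE0 K n q z u h else 1) ≠ 0
      split
      · exact cE0_ne q z u hqq _
      · exact one_ne_zero
  | succ i ih =>
      exact mul_ne_zero (cEn_ne χ q z u hqq _) (mul_ne_zero (cEn_ne χ q z u hqq _) ih)

include hqq in
lemma gammaC_ne (j : ℕ) : gammaC K n χ q z u j ≠ 0 := by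
  induction j with
  | zero => exact cEn_ne χ q z u hqq _
  | succ j ih =>
      refine mul_ne_zero (neg_ne_zero.mpr (Units.ne_zero _))
        (mul_ne_zero (cEn_ne χ q z u hqq _)
          (mul_ne_zero (neg_ne_zero.mpr (Units.ne_zero _))
            (mul_ne_zero ih (cEn_ne χ q z u hqq _))))

lemma aScal_ne (i : ℕ) : aScal K n χ i ≠ 0 := by
  induction i with
  | zero => exact one_ne_zero
  | succ i ih =>
      exact mul_ne_zero (mul_ne_zero (mul_ne_zero ih (Units.ne_zero _)) (Units.ne_zero _))
        (Units.ne_zero _)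

end Scal

section SStep
variable {K : Type} [Field K] {n : ℕ} (χ : Lam n → Lam n → Kˣ) (q : Kˣ)
  (z u : Fin (2 * n) → Kˣ)
variable (hχ1 : ∀ a b c : Lam n, χ (a + b) c = χ a c * χ b c)
variable (hχ2 : ∀ a b c : Lam n, χ a (b + c) = χ a b * χ a c)
variable (hχd : ∀ i : Fin (2 * n), Bfm n i i ≠ 0 → χ (αr n i) (αr n i) = q ^ (Bfm n i i))
variable (hχ0 : ∀ i : Fin (2 * n), Bfm n i i = 0 → ((χ (αr n i) (αr n i) : Kˣ) : K) = -1)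
variable (hχij : ∀ i j : Fin (2 * n), i ≠ j →
      χ (αr n i) (αr n j) * χ (αr n j) (αr n i) = q ^ (2 * Bfm n i j))
variable (hδ : ∀ i : Fin (2 * n), χ (αr n i) (hatδ n) = 1)

include hχ1 hχ2 hχd hχ0 hχij hδ in
lemma Sstep (hn : 2 ≤ n) (i : ℕ) (h : i + 1 < n) :
    aScal K n χ (i+1) * (alphaA K n χ q z u (i+1) * gammaC K n χ q z u (n-1-(i+1)))
      = aScal K n χ i * (alphaA K n χ q z u i * gammaC K n χ q z u (n-1-i)) := by
  have hβ : gammaC K n χ q z u (n-1-i)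
      = -(((χ (degB n (i+1) + αn n (i+1)) (αn n (2*n-i-1)))⁻¹ : Kˣ) : K)
        * (cEn K n χ q z u (2*n-i-1)
          * (-(((χ (αn n (i+1)) (degB n (i+1)))⁻¹ : Kˣ) : K)
            * (gammaC K n χ q z u (n-1-(i+1)) * cEn K n χ q z u (i+1)))) := by
    rw [show n-1-i = (n-1-(i+1))+1 by omega]
    show -(((χ (degB n (n-1-(n-1-(i+1))) + αn n (n-1-(n-1-(i+1))))
        (αn n (n+(n-1-(i+1))+1)))⁻¹ : Kˣ) : K)
      * (cEn K n χ q z u (n+(n-1-(i+1))+1)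
        * (-(((χ (αn n (n-1-(n-1-(i+1)))) (degB n (n-1-(n-1-(i+1)))))⁻¹ : Kˣ) : K)
          * (gammaC K n χ q z u (n-1-(i+1)) * cEn K n χ q z u (n-1-(n-1-(i+1)))))) = _
    rw [show n-1-(n-1-(i+1)) = i+1 by omega, show n+(n-1-(i+1))+1 = 2*n-i-1 by omega]
  have e2 : (∑ t ∈ Finset.Icc (i+1) (2*n-i-2), αn n t) = degB n (i+1) + αn n (i+1) := by
    rw [sum_Icc_split (αn n) (i+1) (i+1) (2*n-i-2) (by omega) (by omega),
      Finset.Icc_self, Finset.sum_singleton, degB_succ_sum]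
    exact add_comm _ _
  have hδl : ((χ (hatδ n) (αn n (2*n-i-1)) : Kˣ) : K) = 1 := by
    rw [chi_hatδ_left χ q hχ1 hχ2 hχd hχ0 hχij hδ (by omega) (2*n-i-1) (by omega)]
    rfl
  show aScal K n χ i * ((χ (hatδ n) (αn n (2*n-i-1)) : Kˣ) : K)
      * ((χ (-αn n (i+1)) (∑ t ∈ Finset.Icc (i+2) (2*n-i-2), αn n t) : Kˣ) : K)
      * ((χ (∑ t ∈ Finset.Icc (i+1) (2*n-i-2), αn n t) (-αn n (2*n-i-1)) : Kˣ) : K)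
      * ((cEn K n χ q z u (2*n-i-1) * (cEn K n χ q z u (i+1) * alphaA K n χ q z u i))
        * gammaC K n χ q z u (n-1-(i+1))) = _
  rw [chi_neg_left χ hχ1, chi_neg_right χ hχ2, ← degB_succ_sum, e2, hβ, hδl]
  ring

end SStep


/-- if `Ψ` is the vector representation of `U^♮_χ` (case of
`sl^{(1)}(n|n)`), then `Ψ(Z) = b·(1_N ⊗ t)` for some `b ∈ K^×`, i.e.
`Ψ(Z)(e_k ⊗ t^m) = b·e_k ⊗ t^{m+1}` for all `k`, `m`. -/
theorem stmt14 (K : Type) [Field K] [CharZero K] (n : ℕ) (hn : 2 ≤ n)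
    (q : Kˣ) (hq : ∀ m : ℕ, 0 < m → (q : K) ^ m ≠ 1)
    (χ : Lam n → Lam n → Kˣ)
    (hχ1 : ∀ a b c : Lam n, χ (a + b) c = χ a c * χ b c)
    (hχ2 : ∀ a b c : Lam n, χ a (b + c) = χ a b * χ a c)
    (hχd : ∀ i : Fin (2 * n), Bfm n i i ≠ 0 → χ (αr n i) (αr n i) = q ^ (Bfm n i i))
    (hχ0 : ∀ i : Fin (2 * n), Bfm n i i = 0 → ((χ (αr n i) (αr n i) : Kˣ) : K) = -1)
    (hχij : ∀ i j : Fin (2 * n), i ≠ j →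
      χ (αr n i) (αr n j) * χ (αr n j) (αr n i) = q ^ (2 * Bfm n i j))
    (hχdd : χ (dr n) (dr n) = 1)
    (hχdi : ∀ i : Fin (2 * n),
      χ (dr n) (αr n i) = q ^ (if (i : ℕ) = 0 then (1 : ℕ) else 0) ∧
      χ (αr n i) (dr n) = q ^ (if (i : ℕ) = 0 then (1 : ℕ) else 0))
    (hδ : ∀ i : Fin (2 * n), χ (αr n i) (hatδ n) = 1)
    (z u : Fin (2 * n) → Kˣ)
    (Ψ : Unat K n χ →ₐ[K] Module.End K (VRep K n))
    (hKd : ∀ (k : Fin (2 * n)) (m : ℤ),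
      Ψ (uK K n χ (dr n)) (basV K n k m) = ((q ^ m : Kˣ) : K) • basV K n k m)
    (hLd : ∀ (k : Fin (2 * n)) (m : ℤ),
      Ψ (uL K n χ (dr n)) (basV K n k m) = ((q ^ (-m) : Kˣ) : K) • basV K n k m)
    (hKα : ∀ (i : Fin (2 * n)) (k : Fin (2 * n)) (m : ℤ),
      Ψ (uK K n χ (αr n i)) (basV K n k m)
        = ((lamK K n χ z i (k : ℕ) : Kˣ) : K) • basV K n k m)
    (hLα : ∀ (i : Fin (2 * n)) (k : Fin (2 * n)) (m : ℤ),
      Ψ (uL K n χ (αr n i)) (basV K n k m)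
        = ((lamL K n χ q z i (k : ℕ) : Kˣ) : K) • basV K n k m)
    (hE0 : ∀ (k : Fin (2 * n)) (m : ℤ),
      Ψ (uE K n χ ⟨0, by omega⟩) (basV K n k m)
        = if (k : ℕ) = 0 then cE0 K n q z u (by omega) • basV K n ⟨2 * n - 1, by omega⟩ (m + 1)
          else 0)
    (hEi : ∀ (i : Fin (2 * n)), i ≠ ⟨0, by omega⟩ → ∀ (k : Fin (2 * n)) (m : ℤ),
      Ψ (uE K n χ i) (basV K n k m)
        = if (k : ℕ) = (i : ℕ)
          then cEi K n χ q z u i • basV K n ⟨(i : ℕ) - 1, by omega⟩ m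
          else 0)
    (hF0 : ∀ (k : Fin (2 * n)) (m : ℤ),
      Ψ (uF K n χ ⟨0, by omega⟩) (basV K n k m)
        = if (k : ℕ) = 2 * n - 1
          then (((u ⟨0, by omega⟩)⁻¹ : Kˣ) : K) • basV K n ⟨0, by omega⟩ (m - 1)
          else 0)
    (hFi : ∀ (i : Fin (2 * n)), i ≠ ⟨0, by omega⟩ → ∀ (k : Fin (2 * n)) (m : ℤ),
      Ψ (uF K n χ i) (basV K n k m)
        = if (k : ℕ) + 1 = (i : ℕ)
          then (((u i)⁻¹ : Kˣ) : K) • basV K n i m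
          else 0) :
    ∃ b : Kˣ, ∀ (k : Fin (2 * n)) (m : ℤ),
      Ψ (Zel K n χ) (basV K n k m) = (b : K) • basV K n k (m + 1) := by
    classical
  have hqq : (q : K) - ((q⁻¹ : Kˣ) : K) ≠ 0 := by
    intro hcon
    have h1 : (q : K) = ((q⁻¹ : Kˣ) : K) := sub_eq_zero.mp hcon
    have h2 : ((q : K)) ^ 2 = 1 := by
      rw [pow_two]
      nth_rewrite 2 [h1]
      exact Units.mul_inv q
    exact hq 2 (by norm_num) h2
  have hA := Arep hn χ q z u Ψ hE0 hEi
  have hC := Crep hn χ q z u Ψ hEi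
  have hbr : ∀ i, i < n → ∀ (k : Fin (2*n)) (m : ℤ),
      Ψ (ubrE K n χ (degA n i) (degB n i) (Aseq K n χ i) (Bseq K n χ i)) (basV K n k m)
        = if (k:ℕ) = i ∨ (k:ℕ) = 2*n-1-i
          then (alphaA K n χ q z u i * gammaC K n χ q z u (n-1-i)) • basV K n k (m+1)
          else 0 := by
    intro i hi k m
    have hkl : (k : ℕ) < 2*n := k.isLt
    have hDBA : (((χ (degB n i) (degA n i))⁻¹ : Kˣ) : K) = -1 := by
      rw [Units.val_inv_eq_inv_val,
        chi_degB_degA χ q hχ1 hχ2 hχd hχ0 hχij hδ hn i hi]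
      norm_num
    rw [psi_ubr, show Bseq K n χ i = Cseq K n χ (n-1-i) from rfl,
      hC (n-1-i) (by omega) k m, hA i hi k m]
    by_cases hk1 : (k:ℕ) = i
    · rw [if_neg (show ¬ (k:ℕ) = n+(n-1-i) by omega), map_zero, zero_sub, if_pos hk1,
        map_smul,
        basV_congr K n ⟨2*n-1-i, by omega⟩ ⟨n+(n-1-i), by omega⟩ (m+1)
          (show 2*n-1-i = n+(n-1-i) by omega),
        hC (n-1-i) (by omega) ⟨n+(n-1-i), by omega⟩ (m+1), if_pos rfl,
        basV_congr K n ⟨n-1-(n-1-i), by omega⟩ k (m+1)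
          (show n-1-(n-1-i) = (k:ℕ) by omega),
        smul_smul, smul_smul, ← neg_smul, if_pos (Or.inl hk1)]
      congr 1
      rw [hDBA]
      ring
    · by_cases hk2 : (k:ℕ) = 2*n-1-i
      · rw [if_pos (show (k:ℕ) = n+(n-1-i) by omega), map_smul,
          basV_congr K n ⟨n-1-(n-1-i), by omega⟩ ⟨i, by omega⟩ m
            (show n-1-(n-1-i) = i by omega),
          hA i hi ⟨i, by omega⟩ m, if_pos rfl,
          basV_congr K n ⟨2*n-1-i, by omega⟩ k (m+1)
            (show 2*n-1-i = (k:ℕ) by omega),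
          if_neg hk1, map_zero, smul_zero, sub_zero, smul_smul, if_pos (Or.inr hk2)]
        congr 1
        ring
      · rw [if_neg (show ¬ (k:ℕ) = n+(n-1-i) by omega), if_neg hk1, map_zero, map_zero,
          if_neg (not_or.mpr ⟨hk1, hk2⟩)]
        simp
  have hconst : ∀ i, i < n →
      aScal K n χ i * (alphaA K n χ q z u i * gammaC K n χ q z u (n-1-i))
        = aScal K n χ 0 * (alphaA K n χ q z u 0 * gammaC K n χ q z u (n-1-0)) := by
    intro i
    induction i with
    | zero => intro _; rfl
    | succ i ih =>
        intro h
        rw [Sstep χ q z u hχ1 hχ2 hχd hχ0 hχij hδ hn i h]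
        exact ih (by omega)
  have hne : aScal K n χ 0 * (alphaA K n χ q z u 0 * gammaC K n χ q z u (n-1-0)) ≠ 0 :=
    mul_ne_zero (aScal_ne χ 0)
      (mul_ne_zero (alphaA_ne χ q z u hqq 0) (gammaC_ne χ q z u hqq (n-1-0)))
  refine ⟨Units.mk0 _ hne, ?_⟩
  intro k m
  have hkl : (k : ℕ) < 2*n := k.isLt
  rw [show Zel K n χ = ∑ i ∈ Finset.range n,
      aScal K n χ i • ubrE K n χ (degA n i) (degB n i) (Aseq K n χ i) (Bseq K n χ i)
    from rfl, map_sum]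
  simp only [map_smul]
  rw [LinearMap.sum_apply]
  simp only [LinearMap.smul_apply]
  have hterm : ∀ i ∈ Finset.range n,
      aScal K n χ i •
        Ψ (ubrE K n χ (degA n i) (degB n i) (Aseq K n χ i) (Bseq K n χ i)) (basV K n k m)
      = if (k:ℕ) = i ∨ (k:ℕ) = 2*n-1-i
        then (aScal K n χ i * (alphaA K n χ q z u i * gammaC K n χ q z u (n-1-i))) •
          basV K n k (m+1)
        else 0 := by
    intro i hi
    rw [hbr i (Finset.mem_range.mp hi) k m]
    split
    · rw [smul_smul]
    · rw [smul_zero]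
  rw [Finset.sum_congr rfl hterm,
    Finset.sum_eq_single (min (k:ℕ) (2*n-1-(k:ℕ)))]
  · rw [if_pos (show (k:ℕ) = min (k:ℕ) (2*n-1-(k:ℕ))
        ∨ (k:ℕ) = 2*n-1-(min (k:ℕ) (2*n-1-(k:ℕ))) by omega),
      hconst (min (k:ℕ) (2*n-1-(k:ℕ))) (by omega)]
    rfl
  · intro i hi hne2
    have hi' : i < n := Finset.mem_range.mp hi
    rw [if_neg (show ¬ ((k:ℕ) = i ∨ (k:ℕ) = 2*n-1-i) by omega)]
  · intro hcon
    exact absurd (Finset.mem_range.mpr (by omega)) hcon
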